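/- Higher rational solution: Let a ∈ ℝ and set X = x + a, T = 12t + a. On the open set where X³ ≠ T, define u(x,t) = −6X(X³ + 2T)/(X³ − T)² and y(x,t) = −2X(X⁶ − 5X³T − 5T² + 9aX)/(X³ − T)². Then (u,y) satisfies both equations of system (Dx) and both equations of system (Dt), and the first integrals take the values H0 = 2y y_xx − y_x² + 4u y² = −100 and H1 = 2z z_xx − z_x² + 4(u−1)z² = −16a², where z = 12tu + 2x + y. -/

import Mathlib

/-- Partial derivative in the first (space) variable. -/
noncomputable def dx (f : ℝ → ℝ → ℝ) : ℝ → ℝ → ℝ := fun x t => deriv (fun x' => f x' t) x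

/-- Partial derivative in the second (time) variable. -/
noncomputable def dt (f : ℝ → ℝ → ℝ) : ℝ → ℝ → ℝ := fun x t => deriv (fun t' => f x t') t

/-- The KdV equation `u_t = u_xxx + 6 u u_x`. -/
def KdV (u : ℝ → ℝ → ℝ) : Prop :=
  ∀ x t, dt u x t = dx (dx (dx u)) x t + 6 * u x t * dx u x t

/-- `v` is the potential of `u`: `v_x = u`, `v_t = u_xx + 3 u²`. -/
def Potential (u v : ℝ → ℝ → ℝ) : Prop :=
  ∀ x t, dx v x t = u x t ∧ dt v x t = dx (dx u) x t + 3 * (u x t) ^ 2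

/-- Equation (eqt): the stationary equation for the linear combination
`u_{τ5} + k1 u_{τ3} + k2 u_{τ1}` of nonautonomous symmetries of KdV. -/
def Eqt (k1 k2 : ℝ) (u v : ℝ → ℝ → ℝ) : Prop :=
  ∀ x t,
    3 * t * dx (fun x t => dx (dx (dx (dx u))) x t + 10 * u x t * dx (dx u) x t
        + 5 * (dx u x t) ^ 2 + 10 * (u x t) ^ 3) x t
    + x * dx (fun x t => dx (dx u) x t + 3 * (u x t) ^ 2) x t
    + 4 * dx (dx u) x t + 8 * (u x t) ^ 2 + 2 * dx u x t * v x t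
    + k1 * (3 * t * dx (fun x t => dx (dx u) x t + 3 * (u x t) ^ 2) x t
        + x * dx u x t + 2 * u x t)
    + k2 * (6 * t * dx u x t + 1) = 0

/-- Pointwise form of system (Dx): the stationary equation and the equation for `y`. -/
def DxEqAt (u y : ℝ → ℝ → ℝ) (x t : ℝ) : Prop :=
  3 * t * (dx (dx (dx u)) x t + 6 * u x t * dx u x t - 4 * dx u x t)
      + x * dx u x t + 2 * u x t - dx y x t - 2 = 0 ∧
  dx (dx (dx y)) x t + 4 * u x t * dx y x t + 2 * dx u x t * y x t = 0

/-- Pointwise form of system (Dt): the KdV flow for `u` and the induced flow for `y`. -/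
def DtEqAt (u y : ℝ → ℝ → ℝ) (x t : ℝ) : Prop :=
  dt u x t = dx (dx (dx u)) x t + 6 * u x t * dx u x t ∧
  dt y x t = 2 * u x t * dx y x t - 2 * dx u x t * y x t

/-- The first integral `H0 = 2 y y_xx - y_x² + 4 u y²`. -/
noncomputable def H0expr (u y : ℝ → ℝ → ℝ) : ℝ → ℝ → ℝ := fun x t =>
  2 * y x t * dx (dx y) x t - (dx y x t) ^ 2 + 4 * u x t * (y x t) ^ 2

/-- The function `z = 12 t u + 2 x + y`. -/
noncomputable def zfun (u y : ℝ → ℝ → ℝ) : ℝ → ℝ → ℝ := fun x t =>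
  12 * t * u x t + 2 * x + y x t

/-- The first integral `H1 = 2 z z_xx - z_x² + 4 (u - 1) z²` with `z = 12 t u + 2 x + y`. -/
noncomputable def H1expr (u y : ℝ → ℝ → ℝ) : ℝ → ℝ → ℝ := fun x t =>
  2 * zfun u y x t * dx (dx (zfun u y)) x t - (dx (zfun u y) x t) ^ 2
    + 4 * (u x t - 1) * (zfun u y x t) ^ 2

/-- The `u`-component of the higher rational solution, with `X = x + a`,
`T = 12t + a`. -/
noncomputable def uRat (a : ℝ) : ℝ → ℝ → ℝ := fun x t =>
  -6 * (x + a) * ((x + a) ^ 3 + 2 * (12 * t + a)) / ((x + a) ^ 3 - (12 * t + a)) ^ 2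

/-- The `y`-component of the higher rational solution, with `X = x + a`,
`T = 12t + a`. -/
noncomputable def yRat (a : ℝ) : ℝ → ℝ → ℝ := fun x t =>
  -2 * (x + a) * ((x + a) ^ 6 - 5 * (x + a) ^ 3 * (12 * t + a)
      - 5 * (12 * t + a) ^ 2 + 9 * a * (x + a)) / ((x + a) ^ 3 - (12 * t + a)) ^ 2

noncomputable def u1f (a : ℝ) : ℝ → ℝ → ℝ := fun x t =>
  (84 * (x+a)^3 * ((12*t+a)^1) + 12 * (x+a)^6 + (12 * (12*t+a)^2)) / ((x+a)^3 - (12*t+a))^3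

noncomputable def u2f (a : ℝ) : ℝ → ℝ → ℝ := fun x t =>
  ((-360) * (x+a)^2 * ((12*t+a)^2) + (-576) * (x+a)^5 * ((12*t+a)^1) + (-36) * (x+a)^8) / ((x+a)^3 - (12*t+a))^4

noncomputable def u3f (a : ℝ) : ℝ → ℝ → ℝ := fun x t =>
  (720 * (x+a)^1 * ((12*t+a)^3) + 6480 * (x+a)^4 * ((12*t+a)^2) + 4320 * (x+a)^7 * ((12*t+a)^1) + 144 * (x+a)^10) / ((x+a)^3 - (12*t+a))^5

noncomputable def utf (a : ℝ) : ℝ → ℝ → ℝ := fun x t =>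
  ((-144) * (x+a)^1 * ((12*t+a)^1) + (-288) * (x+a)^4) / ((x+a)^3 - (12*t+a))^3

noncomputable def y1f (a : ℝ) : ℝ → ℝ → ℝ := fun x t =>
  (36 * (x+a)^1 * ((12*t+a)^1*a^1) + (-90) * (x+a)^3 * ((12*t+a)^2) + 72 * (x+a)^4 * (a^1) + (-6) * (x+a)^6 * ((12*t+a)^1) + (-2) * (x+a)^9 + ((-10) * (12*t+a)^3)) / ((x+a)^3 - (12*t+a))^3

noncomputable def y2f (a : ℝ) : ℝ → ℝ → ℝ := fun x t =>
  (360 * (x+a)^2 * ((12*t+a)^3) + (-576) * (x+a)^3 * ((12*t+a)^1*a^1) + 576 * (x+a)^5 * ((12*t+a)^2) + (-360) * (x+a)^6 * (a^1) + 36 * (x+a)^8 * ((12*t+a)^1) + ((-36) * (12*t+a)^2 * a^1)) / ((x+a)^3 - (12*t+a))^4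

noncomputable def y3f (a : ℝ) : ℝ → ℝ → ℝ := fun x t =>
  ((-720) * (x+a)^1 * ((12*t+a)^4) + 2160 * (x+a)^2 * ((12*t+a)^2*a^1) + (-6480) * (x+a)^4 * ((12*t+a)^3) + 7344 * (x+a)^5 * ((12*t+a)^1*a^1) + (-4320) * (x+a)^7 * ((12*t+a)^2) + 2160 * (x+a)^8 * (a^1) + (-144) * (x+a)^10 * ((12*t+a)^1)) / ((x+a)^3 - (12*t+a))^5

noncomputable def ytf (a : ℝ) : ℝ → ℝ → ℝ := fun x t =>
  ((-432) * (x+a)^2 * (a^1) + 360 * (x+a)^4 * ((12*t+a)^1) + 72 * (x+a)^7) / ((x+a)^3 - (12*t+a))^3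


lemma div_aux {s A B : ℝ} (k : ℕ) (hs : s ≠ 0) (h : B = s ^ k * A) :
    B / (s ^ (k+1)) ^ 2 = A / s ^ (k+2) := by
  subst h
  rw [show (s ^ (k+1))^2 = s^k * s^(k+2) by ring]
  exact mul_div_mul_left _ _ (pow_ne_zero k hs)

lemma hd_u (a x t : ℝ) (h : (x+a)^3 - (12*t+a) ≠ 0) :
    HasDerivAt (fun x' => uRat a x' t) (u1f a x t) x := by
  have hX : HasDerivAt (fun x' : ℝ => x' + a) 1 x := by
    simpa using (hasDerivAt_id x).add_const a
  have hq := HasDerivAt.div ((hX.const_mul (-6)).mul ((hX.pow 3).add_const (2 * (12 * t + a))))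
      (((hX.pow 3).sub_const (12*t+a)).pow 2) (pow_ne_zero _ h)
  simp only [uRat, u1f]
  refine hq.congr_deriv ?_
  simp only [Pi.pow_apply, Pi.mul_apply, Pi.add_apply, Pi.sub_apply]
  refine (div_aux 1 h ?_)
  push_cast
  ring

lemma hd_y (a x t : ℝ) (h : (x+a)^3 - (12*t+a) ≠ 0) :
    HasDerivAt (fun x' => yRat a x' t) (y1f a x t) x := by
  have hX : HasDerivAt (fun x' : ℝ => x' + a) 1 x := by
    simpa using (hasDerivAt_id x).add_const a
  have hq := HasDerivAt.div ((hX.const_mul (-2)).mul ((((hX.pow 6).sub (((hX.pow 3).const_mul 5).mul_const (12 * t + a))).sub_const (5 * (12 * t + a) ^ 2)).add (hX.const_mul (9 * a))))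
      (((hX.pow 3).sub_const (12*t+a)).pow 2) (pow_ne_zero _ h)
  simp only [yRat, y1f]
  refine hq.congr_deriv ?_
  simp only [Pi.pow_apply, Pi.mul_apply, Pi.add_apply, Pi.sub_apply]
  refine (div_aux 1 h ?_)
  push_cast
  ring

lemma hd_u1 (a x t : ℝ) (h : (x+a)^3 - (12*t+a) ≠ 0) :
    HasDerivAt (fun x' => u1f a x' t) (u2f a x t) x := by
  have hX : HasDerivAt (fun x' : ℝ => x' + a) 1 x := by
    simpa using (hasDerivAt_id x).add_const a
  have hq := HasDerivAt.div (((((hX.pow 3).const_mul 84).mul_const ((12*t+a)^1)).add ((hX.pow 6).const_mul 12)).add_const (12 * (12*t+a)^2))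
      (((hX.pow 3).sub_const (12*t+a)).pow 3) (pow_ne_zero _ h)
  simp only [u1f, u2f]
  refine hq.congr_deriv ?_
  simp only [Pi.pow_apply, Pi.mul_apply, Pi.add_apply, Pi.sub_apply]
  refine (div_aux 2 h ?_)
  push_cast
  ring

lemma hd_u2 (a x t : ℝ) (h : (x+a)^3 - (12*t+a) ≠ 0) :
    HasDerivAt (fun x' => u2f a x' t) (u3f a x t) x := by
  have hX : HasDerivAt (fun x' : ℝ => x' + a) 1 x := by
    simpa using (hasDerivAt_id x).add_const a
  have hq := HasDerivAt.div (((((hX.pow 2).const_mul (-360)).mul_const ((12*t+a)^2)).add (((hX.pow 5).const_mul (-576)).mul_const ((12*t+a)^1))).add ((hX.pow 8).const_mul (-36)))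
      (((hX.pow 3).sub_const (12*t+a)).pow 4) (pow_ne_zero _ h)
  simp only [u2f, u3f]
  refine hq.congr_deriv ?_
  simp only [Pi.pow_apply, Pi.mul_apply, Pi.add_apply, Pi.sub_apply]
  refine (div_aux 3 h ?_)
  push_cast
  ring

lemma hd_y1 (a x t : ℝ) (h : (x+a)^3 - (12*t+a) ≠ 0) :
    HasDerivAt (fun x' => y1f a x' t) (y2f a x t) x := by
  have hX : HasDerivAt (fun x' : ℝ => x' + a) 1 x := by
    simpa using (hasDerivAt_id x).add_const a
  have hq := HasDerivAt.div ((((((((hX.pow 1).const_mul 36).mul_const ((12*t+a)^1*a^1)).add (((hX.pow 3).const_mul (-90)).mul_const ((12*t+a)^2))).add (((hX.pow 4).const_mul 72).mul_const (a^1))).add (((hX.pow 6).const_mul (-6)).mul_const ((12*t+a)^1))).add ((hX.pow 9).const_mul (-2))).add_const ((-10) * (12*t+a)^3))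
      (((hX.pow 3).sub_const (12*t+a)).pow 3) (pow_ne_zero _ h)
  simp only [y1f, y2f]
  refine hq.congr_deriv ?_
  simp only [Pi.pow_apply, Pi.mul_apply, Pi.add_apply, Pi.sub_apply]
  refine (div_aux 2 h ?_)
  push_cast
  ring

lemma hd_y2 (a x t : ℝ) (h : (x+a)^3 - (12*t+a) ≠ 0) :
    HasDerivAt (fun x' => y2f a x' t) (y3f a x t) x := by
  have hX : HasDerivAt (fun x' : ℝ => x' + a) 1 x := by
    simpa using (hasDerivAt_id x).add_const a
  have hq := HasDerivAt.div ((((((((hX.pow 2).const_mul 360).mul_const ((12*t+a)^3)).add (((hX.pow 3).const_mul (-576)).mul_const ((12*t+a)^1*a^1))).add (((hX.pow 5).const_mul 576).mul_const ((12*t+a)^2))).add (((hX.pow 6).const_mul (-360)).mul_const (a^1))).add (((hX.pow 8).const_mul 36).mul_const ((12*t+a)^1))).add_const ((-36) * (12*t+a)^2 * a^1))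
      (((hX.pow 3).sub_const (12*t+a)).pow 4) (pow_ne_zero _ h)
  simp only [y2f, y3f]
  refine hq.congr_deriv ?_
  simp only [Pi.pow_apply, Pi.mul_apply, Pi.add_apply, Pi.sub_apply]
  refine (div_aux 3 h ?_)
  push_cast
  ring


noncomputable def z1f (a : ℝ) : ℝ → ℝ → ℝ := fun x t =>
  12 * t * u1f a x t + 2 + y1f a x t

noncomputable def z2f (a : ℝ) : ℝ → ℝ → ℝ := fun x t =>
  12 * t * u2f a x t + y2f a x t

lemma hd_ut (a x t : ℝ) (h : (x+a)^3 - (12*t+a) ≠ 0) :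
    HasDerivAt (fun t' => uRat a x t') (utf a x t) t := by
  have hT : HasDerivAt (fun t' : ℝ => 12 * t' + a) 12 t := by
    simpa using ((hasDerivAt_id t).const_mul 12).add_const a
  have hq := HasDerivAt.div (((hT.const_mul 2).const_add ((x + a) ^ 3)).const_mul (-6 * (x + a)))
      ((hT.const_sub ((x + a) ^ 3)).pow 2) (pow_ne_zero _ h)
  simp only [uRat, utf]
  refine hq.congr_deriv ?_
  simp only [Pi.pow_apply, Pi.mul_apply, Pi.add_apply, Pi.sub_apply]
  refine (div_aux 1 h ?_)
  push_cast
  ring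

lemma hd_yt (a x t : ℝ) (h : (x+a)^3 - (12*t+a) ≠ 0) :
    HasDerivAt (fun t' => yRat a x t') (ytf a x t) t := by
  have hT : HasDerivAt (fun t' : ℝ => 12 * t' + a) 12 t := by
    simpa using ((hasDerivAt_id t).const_mul 12).add_const a
  have hq := HasDerivAt.div (((((hT.const_mul (5 * (x + a) ^ 3)).const_sub ((x + a) ^ 6)).sub ((hT.pow 2).const_mul 5)).add_const (9 * a * (x + a))).const_mul (-2 * (x + a)))
      ((hT.const_sub ((x + a) ^ 3)).pow 2) (pow_ne_zero _ h)
  simp only [yRat, ytf]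
  refine hq.congr_deriv ?_
  simp only [Pi.pow_apply, Pi.mul_apply, Pi.add_apply, Pi.sub_apply]
  refine (div_aux 1 h ?_)
  push_cast
  ring

lemma hd_z (a x t : ℝ) (h : (x+a)^3 - (12*t+a) ≠ 0) :
    HasDerivAt (fun x' => zfun (uRat a) (yRat a) x' t) (z1f a x t) x := by
  have h1 := (((hd_u a x t h).const_mul (12 * t)).add ((hasDerivAt_id x).const_mul 2)).add
      (hd_y a x t h)
  simp only [zfun, z1f]
  refine h1.congr_deriv ?_
  all_goals ring

lemma hd_z1 (a x t : ℝ) (h : (x+a)^3 - (12*t+a) ≠ 0) :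
    HasDerivAt (fun x' => z1f a x' t) (z2f a x t) x := by
  have h1 := (((hd_u1 a x t h).const_mul (12 * t)).add_const 2).add (hd_y1 a x t h)
  simp only [z1f, z2f]
  refine h1.congr_deriv ?_
  all_goals ring

lemma dx_congr_aux {F G : ℝ → ℝ → ℝ} (a x t : ℝ)
    (h : (x+a)^3 - (12*t+a) ≠ 0)
    (hFG : ∀ x', (x'+a)^3 - (12*t+a) ≠ 0 → F x' t = G x' t) :
    dx F x t = dx G x t := by
  have hc : ContinuousAt (fun x' : ℝ => (x'+a)^3 - (12*t+a)) x := by fun_prop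
  have hev : ∀ᶠ x' in nhds x, (x'+a)^3 - (12*t+a) ≠ 0 := hc.eventually_ne h
  exact Filter.EventuallyEq.deriv_eq (hev.mono fun x' hx' => hFG x' hx')

lemma dxu (a x t : ℝ) (h : (x+a)^3 - (12*t+a) ≠ 0) :
    dx (uRat a) x t = u1f a x t := (hd_u a x t h).deriv

lemma dxy (a x t : ℝ) (h : (x+a)^3 - (12*t+a) ≠ 0) :
    dx (yRat a) x t = y1f a x t := (hd_y a x t h).deriv

lemma dx2u (a x t : ℝ) (h : (x+a)^3 - (12*t+a) ≠ 0) :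
    dx (dx (uRat a)) x t = u2f a x t := by
  rw [dx_congr_aux a x t h (fun x' h' => dxu a x' t h')]
  exact (hd_u1 a x t h).deriv

lemma dx2y (a x t : ℝ) (h : (x+a)^3 - (12*t+a) ≠ 0) :
    dx (dx (yRat a)) x t = y2f a x t := by
  rw [dx_congr_aux a x t h (fun x' h' => dxy a x' t h')]
  exact (hd_y1 a x t h).deriv

lemma dx3u (a x t : ℝ) (h : (x+a)^3 - (12*t+a) ≠ 0) :
    dx (dx (dx (uRat a))) x t = u3f a x t := by
  rw [dx_congr_aux a x t h (fun x' h' => dx2u a x' t h')]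
  exact (hd_u2 a x t h).deriv

lemma dx3y (a x t : ℝ) (h : (x+a)^3 - (12*t+a) ≠ 0) :
    dx (dx (dx (yRat a))) x t = y3f a x t := by
  rw [dx_congr_aux a x t h (fun x' h' => dx2y a x' t h')]
  exact (hd_y2 a x t h).deriv

lemma dxz (a x t : ℝ) (h : (x+a)^3 - (12*t+a) ≠ 0) :
    dx (zfun (uRat a) (yRat a)) x t = z1f a x t := (hd_z a x t h).deriv

lemma dx2z (a x t : ℝ) (h : (x+a)^3 - (12*t+a) ≠ 0) :
    dx (dx (zfun (uRat a) (yRat a))) x t = z2f a x t := by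
  rw [dx_congr_aux a x t h (fun x' h' => dxz a x' t h')]
  exact (hd_z1 a x t h).deriv

lemma dtu (a x t : ℝ) (h : (x+a)^3 - (12*t+a) ≠ 0) :
    dt (uRat a) x t = utf a x t := (hd_ut a x t h).deriv

lemma dty (a x t : ℝ) (h : (x+a)^3 - (12*t+a) ≠ 0) :
    dt (yRat a) x t = ytf a x t := (hd_yt a x t h).deriv


lemma goal1_aux {c d Nu N1 N3 My s : ℝ} (hs : s ≠ 0)
    (hid : 3*c*(N3 + 6*Nu*N1 - 4*(N1*s^2)) + d*(N1*s^2) + 2*(Nu*s^3) - My*s^2 - 2*s^5 = 0) :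
    3*c*(N3/s^5 + 6*(Nu/s^2)*(N1/s^3) - 4*(N1/s^3)) + d*(N1/s^3) + 2*(Nu/s^2) - My/s^3 - 2 = 0 := by
  field_simp
  linear_combination hid

lemma goal2_aux {Nu N1 Ny My1 My3 s : ℝ} (hs : s ≠ 0)
    (hid : My3 + 4*(Nu*My1) + 2*(N1*Ny) = 0) :
    My3/s^5 + 4*(Nu/s^2)*(My1/s^3) + 2*(N1/s^3)*(Ny/s^2) = 0 := by
  field_simp
  linear_combination hid

lemma goal3_aux {Nu N1 N3 Nut s : ℝ} (hs : s ≠ 0)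
    (hid : Nut*s^2 = N3 + 6*(Nu*N1)) :
    Nut/s^3 = N3/s^5 + 6*(Nu/s^2)*(N1/s^3) := by
  field_simp
  linear_combination hid

lemma goal4_aux {Nu N1 Ny My1 Nyt s : ℝ} (hs : s ≠ 0)
    (hid : Nyt*s^2 = 2*(Nu*My1) - 2*(N1*Ny)) :
    Nyt/s^3 = 2*(Nu/s^2)*(My1/s^3) - 2*(N1/s^3)*(Ny/s^2) := by
  field_simp
  linear_combination hid

lemma goal5_aux {Nu Ny My1 My2 s : ℝ} (hs : s ≠ 0)
    (hid : 2*(Ny*My2) - My1^2 + 4*(Nu*Ny^2) = -100*s^6) :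
    2*(Ny/s^2)*(My2/s^4) - (My1/s^3)^2 + 4*(Nu/s^2)*(Ny/s^2)^2 = -100 := by
  field_simp
  linear_combination hid

lemma goal6_aux {c d e Nu N1 N2 Ny My1 My2 s : ℝ} (hs : s ≠ 0)
    (hid : 2*((12*c*Nu + 2*d*s^2 + Ny)*(12*c*N2 + My2)) - (12*c*N1 + 2*s^3 + My1)^2
        + 4*((Nu - s^2)*(12*c*Nu + 2*d*s^2 + Ny)^2) = -16*e^2*s^6) :
    2*(12*c*(Nu/s^2) + 2*d + Ny/s^2)*(12*c*(N2/s^4) + My2/s^4)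
      - (12*c*(N1/s^3) + 2 + My1/s^3)^2
      + 4*(Nu/s^2 - 1)*(12*c*(Nu/s^2) + 2*d + Ny/s^2)^2 = -16*e^2 := by
  field_simp
  linear_combination hid

set_option maxHeartbeats 1000000 in
/-- The higher rational solution solves systems (Dx), (Dt) on the set where
`X³ ≠ T`, with `H0 = -100` and `H1 = -16a²`. -/
theorem higher_rational_solution (a : ℝ) :
    ∀ x t : ℝ, (x + a) ^ 3 ≠ 12 * t + a →
      DxEqAt (uRat a) (yRat a) x t ∧
      DtEqAt (uRat a) (yRat a) x t ∧
      H0expr (uRat a) (yRat a) x t = -100 ∧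
      H1expr (uRat a) (yRat a) x t = -16 * a ^ 2 := by
  intro x t hne
  have h : (x+a)^3 - (12*t+a) ≠ 0 := sub_ne_zero.mpr hne
  refine ⟨⟨?_, ?_⟩, ⟨?_, ?_⟩, ?_, ?_⟩
  · rw [dx3u a x t h, dxu a x t h, dxy a x t h]
    simp only [uRat, u1f, u3f, y1f]
    refine goal1_aux h ?_
    ring
  · rw [dx3y a x t h, dxy a x t h, dxu a x t h]
    simp only [uRat, yRat, u1f, y1f, y3f]
    refine goal2_aux h ?_
    ring
  · rw [dtu a x t h, dx3u a x t h, dxu a x t h]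
    simp only [uRat, u1f, u3f, utf]
    refine goal3_aux h ?_
    ring
  · rw [dty a x t h, dxy a x t h, dxu a x t h]
    simp only [uRat, yRat, u1f, y1f, ytf]
    refine goal4_aux h ?_
    ring
  · simp only [H0expr]
    rw [dx2y a x t h, dxy a x t h]
    simp only [uRat, yRat, y1f, y2f]
    refine goal5_aux h ?_
    ring
  · simp only [H1expr]
    rw [dx2z a x t h, dxz a x t h]
    simp only [zfun, uRat, yRat, u1f, u2f, y1f, y2f, z1f, z2f]
    refine goal6_aux h ?_
    ring
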